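/- Let ∼_n be equivalence relations on [n]² satisfying (E2) with constant B, let π be a partition of [k] with #π = r, and let n ≥ B. Then #T_{n,k}(π) ≤ n^{r+1}·B^{k−r−1}. If moreover π contains a singleton block, then #T_{n,k}(π) ≤ n^r·B^{k−r}. -/

import Mathlib

open MeasureTheory Filter Finset

noncomputable def esd {n : ℕ} (A : Matrix (Fin n) (Fin n) ℝ) : Measure ℝ :=
  if hA : A.IsHermitian then ((n : ENNReal))⁻¹ • ∑ i : Fin n, Measure.dirac (hA.eigenvalues i)
  else 0

/-- Weak convergence in probability of a sequence of random measures to a fixed measure. -/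
def WeakInProb {Ω : Type*} [MeasurableSpace Ω] (P : Measure Ω)
    (μ : ℕ → Ω → Measure ℝ) (ν : Measure ℝ) : Prop :=
  ∀ f : BoundedContinuousFunction ℝ ℝ, ∀ ε : ℝ, 0 < ε →
    Tendsto (fun n => P {ω | ε ≤ |(∫ x, f x ∂(μ n ω)) - ∫ x, f x ∂ν|}) atTop (nhds 0)

/-- Weak convergence almost surely of a sequence of random measures to a fixed measure. -/
def WeakAS {Ω : Type*} [MeasurableSpace Ω] (P : Measure Ω)
    (μ : ℕ → Ω → Measure ℝ) (ν : Measure ℝ) : Prop :=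
  ∀ᵐ ω ∂P, ∀ f : BoundedContinuousFunction ℝ ℝ,
    Tendsto (fun n => ∫ x, f x ∂(μ n ω)) atTop (nhds (∫ x, f x ∂ν))

/-- Cyclic successor in `Fin k`. -/
def cyc {k : ℕ} (j : Fin k) : Fin k := j + ⟨1 % k, Nat.mod_lt 1 j.pos⟩

/-- `R` is a family of equivalence relations on `[n]²` with `(p,q) ∼ (q,p)`. -/
def EquivFamily (R : (n : ℕ) → (Fin n × Fin n) → (Fin n × Fin n) → Prop) : Prop :=
  ∀ n : ℕ, Equivalence (R n) ∧ ∀ p q : Fin n, R n (p, q) (q, p)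

/-- The count appearing in condition (E1). -/
noncomputable def E1count (R : (n : ℕ) → (Fin n × Fin n) → (Fin n × Fin n) → Prop)
    (n : ℕ) : ℕ :=
  Finset.univ.sup fun p : Fin n =>
    Nat.card {x : Fin n × Fin n × Fin n // R n (p, x.1) (x.2.1, x.2.2)}

/-- Condition (E1): the (E1)-count is `o(n²)`. -/
def CondE1 (R : (n : ℕ) → (Fin n × Fin n) → (Fin n × Fin n) → Prop) : Prop :=
  Tendsto (fun n => (E1count R n : ℝ) / (n : ℝ) ^ 2) atTop (nhds 0)

/-- Condition (E1'): the (E1)-count is `O(n^{2-δ})` for some fixed `δ > 0`. -/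
def CondE1' (R : (n : ℕ) → (Fin n × Fin n) → (Fin n × Fin n) → Prop) : Prop :=
  ∃ δ : ℝ, 0 < δ ∧ ∃ c : ℝ, ∀ n : ℕ, (E1count R n : ℝ) ≤ c * (n : ℝ) ^ ((2 : ℝ) - δ)

/-- Condition (E2) with constant `B`. -/
def CondE2 (R : (n : ℕ) → (Fin n × Fin n) → (Fin n × Fin n) → Prop) (B : ℕ) : Prop :=
  ∀ (n : ℕ) (p q r : Fin n), Nat.card {s : Fin n // R n (p, q) (r, s)} ≤ B

/-- The count appearing in condition (E3). -/
noncomputable def E3count (R : (n : ℕ) → (Fin n × Fin n) → (Fin n × Fin n) → Prop)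
    (n : ℕ) : ℕ :=
  Nat.card {x : Fin n × Fin n × Fin n // R n (x.1, x.2.1) (x.2.1, x.2.2) ∧ x.2.2 ≠ x.1}

/-- Condition (E3): the (E3)-count is `o(n²)`. -/
def CondE3 (R : (n : ℕ) → (Fin n × Fin n) → (Fin n × Fin n) → Prop) : Prop :=
  Tendsto (fun n => (E3count R n : ℝ) / (n : ℝ) ^ 2) atTop (nhds 0)

/-- Condition (E3'): the (E3)-count is `O(n^{2-δ})` for some fixed `δ > 0`. -/
def CondE3' (R : (n : ℕ) → (Fin n × Fin n) → (Fin n × Fin n) → Prop) : Prop :=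
  ∃ δ : ℝ, 0 < δ ∧ ∃ c : ℝ, ∀ n : ℕ, (E3count R n : ℝ) ≤ c * (n : ℝ) ^ ((2 : ℝ) - δ)

/-- The `j`-th (directed) edge of the tuple `t` (indices cyclic mod `k`). -/
def tedge {n k : ℕ} (t : Fin k → Fin n) (j : Fin k) : Fin n × Fin n := (t j, t (cyc j))

/-- The weight `w(t̲) = ∏ⱼ w(|tⱼ − tⱼ₊₁|/n)` of a tuple. -/
noncomputable def wprod {n k : ℕ} (w : ℝ → ℝ) (t : Fin k → Fin n) : ℝ :=
  ∏ j : Fin k, w (|((t j : ℕ) : ℝ) - ((t (cyc j) : ℕ) : ℝ)| / (n : ℝ))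

/-- The product `a_n(t̲) = ∏ⱼ a_n(tⱼ, tⱼ₊₁)` along a tuple. -/
noncomputable def aprod {Ω : Type*} {n k : ℕ} (A : Ω → Matrix (Fin n) (Fin n) ℝ)
    (t : Fin k → Fin n) (ω : Ω) : ℝ :=
  ∏ j : Fin k, A ω (t j) (t (cyc j))

/-- The triangular scheme `a` is SSB-HKW correlated with respect to the equivalence
relations `R`, with constants `C` and sequences `c`: conditions (A1) and (A2). -/
def IsSSBHKW {Ω : Type*} [MeasurableSpace Ω] (P : Measure Ω)
    (R : (n : ℕ) → (Fin n × Fin n) → (Fin n × Fin n) → Prop)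
    (a : (n : ℕ) → Ω → Matrix (Fin n) (Fin n) ℝ) (C : ℕ → ℝ) (c : ℕ → ℕ → ℝ) : Prop :=
  (∀ n (ω : Ω), (a n ω).IsSymm) ∧
  (∀ (n : ℕ) (p q : Fin n), Measurable fun ω => a n ω p q) ∧
  (∀ s : ℕ, Tendsto (fun n => c s n) atTop (nhds 0)) ∧
  (∀ (n s l : ℕ) (Pa : Fin s → Fin n × Fin n) (Q : Fin l → Fin n × Fin n),
    Function.Injective Pa → Function.Injective Q → (∀ i j, Pa i ≠ Q j) →
    (∀ i j, i ≠ j → ¬ R n (Pa i) (Pa j)) →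
    ∀ δ : Fin l → ℕ, (∀ j, 1 ≤ δ j) →
      |∫ ω, (∏ i, a n ω (Pa i).1 (Pa i).2) * ∏ j, a n ω (Q j).1 (Q j).2 ^ δ j ∂P| ≤
        C (s + ∑ j, δ j) / (n : ℝ) ^ ((s : ℝ) / 2)) ∧
  (∀ (n s : ℕ) (Pa : Fin s → Fin n × Fin n), Function.Injective Pa →
    (∀ i j, i ≠ j → ¬ R n (Pa i) (Pa j)) →
      |(∫ ω, ∏ i, a n ω (Pa i).1 (Pa i).2 ^ 2 ∂P) - 1| ≤ c s n)

/-- `w` is Riemann integrable on `[0,1]`: it is continuous on `[0,1]` outside a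
Lebesgue null set (Lebesgue's criterion; boundedness is assumed separately). -/
def RiemannIntOn01 (w : ℝ → ℝ) : Prop :=
  ∃ s : Set ℝ, MeasureTheory.volume s = 0 ∧
    ∀ x ∈ Set.Icc (0 : ℝ) 1 \ s, ContinuousWithinAt w (Set.Icc (0 : ℝ) 1) x

/-- The weighted matrix `Xₙ = n^{-1/2}[w(|i−j|/n)·aₙ(i,j)]`. -/
noncomputable def wtMat {n : ℕ} (w : ℝ → ℝ) (A : Matrix (Fin n) (Fin n) ℝ) :
    Matrix (Fin n) (Fin n) ℝ :=
  Matrix.of fun i j =>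
    w (|((i : ℕ) : ℝ) - ((j : ℕ) : ℝ)| / (n : ℝ)) * A i j / Real.sqrt n

open Classical in
/-- The set `T_{n,k}(π)` of tuples whose edge-equivalence partition under `∼ₙ` is the
partition given by the setoid `s`. -/
noncomputable def TFin (R : (n : ℕ) → (Fin n × Fin n) → (Fin n × Fin n) → Prop)
    (n k : ℕ) (s : Setoid (Fin k)) : Finset (Fin k → Fin n) :=
  Finset.univ.filter fun t => ∀ i j : Fin k, R n (tedge t i) (tedge t j) ↔ s.r i j

/-- `p` encodes a pair partition of `[k]` (a fixed-point-free involution, blocks `{i, p i}`). -/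
def IsPairPart {k : ℕ} (p : Fin k → Fin k) : Prop :=
  (∀ i, p (p i) = i) ∧ ∀ i, p i ≠ i

/-- The pair partition encoded by `p` is crossing. -/
def Crossing {k : ℕ} (p : Fin k → Fin k) : Prop :=
  ∃ a b c d : Fin k, a < b ∧ b < c ∧ c < d ∧ p a = c ∧ p b = d

open Classical in
/-- The non-crossing pair partitions of `[k]`, encoded as fixed-point-free involutions. -/
noncomputable def NPPFinset (k : ℕ) : Finset (Fin k → Fin k) :=
  Finset.univ.filter fun p => IsPairPart p ∧ ¬ Crossing p

open Classical in
/-- `T_{n,k}(π)` for a pair partition `π` encoded by `p`. -/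
noncomputable def TpairFin (R : (n : ℕ) → (Fin n × Fin n) → (Fin n × Fin n) → Prop)
    (n k : ℕ) (p : Fin k → Fin k) : Finset (Fin k → Fin n) :=
  Finset.univ.filter fun t =>
    ∀ i j : Fin k, R n (tedge t i) (tedge t j) ↔ (i = j ∨ p i = j)

open Classical in
/-- `BT_{n,k}(π)`: the `π`-backtracking tuples in `T_{n,k}(π)` with `k/2 + 1` vertices. -/
noncomputable def BTFin (R : (n : ℕ) → (Fin n × Fin n) → (Fin n × Fin n) → Prop)
    (n k : ℕ) (p : Fin k → Fin k) : Finset (Fin k → Fin n) :=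
  (TpairFin R n k p).filter fun t =>
    (∀ i : Fin k, t i = t (cyc (p i)) ∧ t (cyc i) = t (p i)) ∧
    (Finset.univ.image t).card = k / 2 + 1

/-- The canonical `π`-backtracking tuple (0-based values `0, …, k/2`). -/
noncomputable def canonT0 {k : ℕ} (p : Fin k → Fin k) : ℕ → ℕ
  | 0 => 0
  | (j + 1) =>
    if j = 0 then 1
    else if h : j < k then
      if hp : ((p ⟨j, h⟩ : Fin k) : ℕ) < j then canonT0 p ((p ⟨j, h⟩ : Fin k) : ℕ)
      else 1 + ((Finset.Icc 1 j).filter fun j' =>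
        ∃ h' : j' < k, j' ≤ ((p ⟨j', h'⟩ : Fin k) : ℕ)).card
    else 0


section Lemma32Helpers

variable {k : ℕ}

/-- `j` is the minimum of its block of `s`. -/
def IsMinBlock (s : Setoid (Fin k)) (j : Fin k) : Prop := ∀ i, s.r i j → j ≤ i

lemma cyc_mk {j : ℕ} (h : j + 1 < k) :
    cyc (⟨j, Nat.lt_of_succ_lt h⟩ : Fin k) = ⟨j + 1, h⟩ := by
  have hk : 1 < k := by omega
  apply Fin.ext
  simp [cyc, Fin.add_def, Nat.mod_eq_of_lt hk, Nat.mod_eq_of_lt h]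

lemma cyc_add (a d : Fin k) : cyc (a + d) = cyc a + d := by
  unfold cyc; rw [add_right_comm]

lemma tedge_rot {n : ℕ} (t : Fin k → Fin n) (d : Fin k) (a : Fin k) :
    tedge (fun j => t (j + d)) a = tedge t (a + d) := by
  simp [tedge, cyc_add]

open Classical in
lemma card_isMinBlock (s : Setoid (Fin k)) :
    (Finset.univ.filter fun j => IsMinBlock s j).card = Nat.card (Quotient s) := by
  classical
  rw [Nat.card_eq_fintype_card, ← Finset.card_univ]
  apply Finset.card_bij (fun j _ => (Quotient.mk s j))
  · intro a _; exact Finset.mem_univ _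
  · intro a ha b hb hab
    rw [Finset.mem_filter] at ha hb
    have hab' : s.r a b := Quotient.eq''.mp hab
    exact le_antisymm (ha.2 b (s.symm hab')) (hb.2 a hab')
  · intro q _
    have hne : (Finset.univ.filter fun i : Fin k => s.r i q.out).Nonempty :=
      ⟨q.out, by simp only [Finset.mem_filter, Finset.mem_univ, true_and]; exact s.refl _⟩
    have hmem : s.r ((Finset.univ.filter fun i : Fin k => s.r i q.out).min' hne) q.out := by
      have h0 := Finset.min'_mem (Finset.univ.filter fun i : Fin k => s.r i q.out) hne
      rw [Finset.mem_filter] at h0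
      exact h0.2
    refine ⟨(Finset.univ.filter fun i : Fin k => s.r i q.out).min' hne, ?_, ?_⟩
    · rw [Finset.mem_filter]
      refine ⟨Finset.mem_univ _, fun i hi => ?_⟩
      have h2 : s.r i q.out := s.trans hi hmem
      exact Finset.min'_le _ _ (by simp only [Finset.mem_filter, Finset.mem_univ, true_and]; exact h2)
    · calc Quotient.mk s ((Finset.univ.filter fun i : Fin k => s.r i q.out).min' hne)
          = Quotient.mk s q.out := Quotient.sound hmem
        _ = q := q.out_eq

/-- The rotated setoid. -/
def rotSetoid (s : Setoid (Fin k)) (d : Fin k) : Setoid (Fin k) where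
  r a b := s.r (a + d) (b + d)
  iseqv := ⟨fun _ => s.refl _, fun h => s.symm h, fun h h' => s.trans h h'⟩

lemma rotSetoid_card (hk : 1 ≤ k) (s : Setoid (Fin k)) (d : Fin k) :
    Nat.card (Quotient (rotSetoid s d)) = Nat.card (Quotient s) := by
  haveI : NeZero k := ⟨by omega⟩
  exact Nat.card_congr (Quotient.congr (Equiv.addRight d) (fun _ _ => Iff.rfl))

lemma TFin_rot_card (R : (n : ℕ) → (Fin n × Fin n) → (Fin n × Fin n) → Prop)
    (n : ℕ) (hk : 1 ≤ k) (s : Setoid (Fin k)) (d : Fin k) :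
    (TFin R n k s).card = (TFin R n k (rotSetoid s d)).card := by
  classical
  haveI : NeZero k := ⟨by omega⟩
  apply Finset.card_bij' (fun t _ => fun j : Fin k => t (j + d))
    (fun t _ => fun j : Fin k => t (j - d))
  · intro t ht
    rw [TFin, Finset.mem_filter] at ht ⊢
    refine ⟨Finset.mem_univ _, fun a b => ?_⟩
    rw [tedge_rot, tedge_rot]
    exact ht.2 (a + d) (b + d)
  · intro t ht
    rw [TFin, Finset.mem_filter] at ht ⊢
    refine ⟨Finset.mem_univ _, fun a b => ?_⟩
    have hfe : (fun j : Fin k => t (j - d)) = fun j : Fin k => t (j + -d) := by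
      funext j; rw [sub_eq_add_neg]
    rw [hfe, tedge_rot, tedge_rot]
    have := ht.2 (a + -d) (b + -d)
    have hrr : ∀ x : Fin k, x + -d + d = x := by intro x; abel
    rw [show (rotSetoid s d).r (a + -d) (b + -d) = s.r (a + -d + d) (b + -d + d) from rfl,
      hrr, hrr] at this
    exact this
  · intro t _; funext j; simp
  · intro t _; funext j; simp

/-- Monotonicity of the mixed power bound. -/
lemma arith_mono {n B a b k : ℕ} (hB : 1 ≤ B) (hn : B ≤ n) (hab : a ≤ b) :
    n ^ a * B ^ (k - a) ≤ n ^ b * B ^ (k - b) := by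
  have h1 : k - a ≤ (b - a) + (k - b) := by omega
  calc n ^ a * B ^ (k - a) ≤ n ^ a * B ^ ((b - a) + (k - b)) :=
        Nat.mul_le_mul_left _ (Nat.pow_le_pow_right hB h1)
    _ = (n ^ a * B ^ (b - a)) * B ^ (k - b) := by rw [pow_add, mul_assoc]
    _ ≤ (n ^ a * n ^ (b - a)) * B ^ (k - b) :=
        Nat.mul_le_mul_right _ (Nat.mul_le_mul_left _ (Nat.pow_le_pow_left hn _))
    _ = n ^ b * B ^ (k - b) := by rw [← pow_add, Nat.add_sub_cancel' hab]

open Classical in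
/-- The core counting argument: the prefix-extension bound. -/
lemma TFin_card_le_prod (R : (n : ℕ) → (Fin n × Fin n) → (Fin n × Fin n) → Prop)
    (B : ℕ) (hE2 : CondE2 R B) {k : ℕ} (s : Setoid (Fin k)) (n : ℕ) :
    (TFin R n k s).card ≤
      ∏ j ∈ Finset.range k, (if j = 0 then n
        else if ∃ h : j - 1 < k, IsMinBlock s ⟨j - 1, h⟩ then n else B) := by
  classical
  set cnat : ℕ → ℕ := fun j => (if j = 0 then n
        else if ∃ h : j - 1 < k, IsMinBlock s ⟨j - 1, h⟩ then n else B) with hcnat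
  set T := TFin R n k s with hT
  have hTmem : ∀ t ∈ T, ∀ a b : Fin k, R n (tedge t a) (tedge t b) ↔ s.r a b := by
    intro t ht
    rw [hT, TFin, Finset.mem_filter] at ht
    exact ht.2
  have key : ∀ m, ∀ hm : m ≤ k,
      (T.image fun t => fun i : Fin m => t (Fin.castLE hm i)).card ≤
        ∏ j ∈ Finset.range m, cnat j := by
    intro m
    induction m with
    | zero =>
      intro hm
      simpa using le_trans (Finset.card_le_univ _) (by simp)
    | succ m ih =>
      intro hm
      have hmk : m < k := hm
      have hm' : m ≤ k := le_of_lt hmk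
      have hcomp : (T.image fun t => fun i : Fin m => t (Fin.castLE hm' i)) =
          (T.image fun t => fun i : Fin (m+1) => t (Fin.castLE hm i)).image
            (fun v => fun i : Fin m => v i.castSucc) := by
        rw [Finset.image_image]; rfl
      -- injectivity of the "last value" map on each fiber
      have hinj : ∀ u : Fin m → Fin n,
          Set.InjOn (fun v : Fin (m+1) → Fin n => v (Fin.last m))
            ↑(((T.image fun t => fun i : Fin (m+1) => t (Fin.castLE hm i)).filter
              (fun v => (fun i : Fin m => v i.castSucc) = u))) := by
        intro u v1 hv1 v2 hv2 heq
        rw [Finset.mem_coe, Finset.mem_filter] at hv1 hv2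
        have hlast : v1 (Fin.last m) = v2 (Fin.last m) := heq
        funext a
        refine Fin.lastCases ?_ ?_ a
        · exact hlast
        · intro c
          calc v1 c.castSucc = u c := congrFun hv1.2 c
            _ = v2 c.castSucc := (congrFun hv2.2 c).symm
      have hfiber : ∀ u ∈ (T.image fun t => fun i : Fin (m+1) => t (Fin.castLE hm i)).image
            (fun v => fun i : Fin m => v i.castSucc),
          ((T.image fun t => fun i : Fin (m+1) => t (Fin.castLE hm i)).filter
            (fun v => (fun i : Fin m => v i.castSucc) = u)).card ≤ cnat m := by
        intro u _
        by_cases hcase : m = 0 ∨ ∃ h : m - 1 < k, IsMinBlock s ⟨m - 1, h⟩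
        · have hc : cnat m = n := by
            rcases hcase with h0 | hmin
            · simp [hcnat, h0]
            · simp only [hcnat]
              rcases Nat.eq_zero_or_pos m with h0 | h0
              · simp [h0]
              · rw [if_neg (by omega), if_pos hmin]
          rw [hc]
          calc ((T.image fun t => fun i : Fin (m+1) => t (Fin.castLE hm i)).filter
              (fun v => (fun i : Fin m => v i.castSucc) = u)).card
              ≤ (Finset.univ : Finset (Fin n)).card :=
                Finset.card_le_card_of_injOn _ (fun _ _ => Finset.mem_univ _) (hinj u)
            _ = n := by simp
        · push_neg at hcase
          obtain ⟨hm0, hmin⟩ := hcase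
          have h1 : m - 1 < k := by omega
          have hnotmin : ¬ IsMinBlock s ⟨m - 1, h1⟩ := fun h => hmin h1 h
          rw [IsMinBlock] at hnotmin
          push_neg at hnotmin
          obtain ⟨i, hir, hlt⟩ := hnotmin
          have hilt : i.1 < m - 1 := hlt
          have hi1 : i.1 < m := by omega
          have hi2 : i.1 + 1 < m := by omega
          have hm1 : m - 1 < m := by omega
          have hmlt : m < m + 1 := by omega
          set D := Finset.univ.filter (fun x : Fin n =>
            R n (u ⟨i.1, hi1⟩, u ⟨i.1 + 1, hi2⟩) (u ⟨m - 1, hm1⟩, x)) with hD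
          have hDB : D.card ≤ B := by
            have h2 := hE2 n (u ⟨i.1, hi1⟩) (u ⟨i.1 + 1, hi2⟩) (u ⟨m - 1, hm1⟩)
            rwa [Nat.card_eq_fintype_card, Fintype.card_subtype] at h2
          have hc : cnat m = B := by
            simp only [hcnat]
            rw [if_neg (by omega), if_neg (by intro h; exact hmin h.1 h.2)]
          rw [hc]
          refine le_trans (Finset.card_le_card_of_injOn
            (fun v : Fin (m+1) → Fin n => v (Fin.last m)) ?_ (hinj u)) hDB
          intro v hv
          rw [Finset.mem_coe, Finset.mem_filter] at hv
          obtain ⟨t, ht, hft⟩ := Finset.mem_image.mp hv.1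
          have hiff := hTmem t ht
          have hrel : R n (tedge t i) (tedge t ⟨m - 1, h1⟩) := (hiff i ⟨m - 1, h1⟩).mpr hir
          have hik : i.1 + 1 < k := by omega
          have hcyci : cyc i = ⟨i.1 + 1, hik⟩ := cyc_mk hik
          have hmk2 : (m - 1) + 1 < k := by omega
          have hcycm : cyc (⟨m - 1, h1⟩ : Fin k) = ⟨m, by omega⟩ := by
            rw [cyc_mk hmk2]; apply Fin.ext; simp; omega
          have hedgei : tedge t i = (t ⟨i.1, by omega⟩, t ⟨i.1 + 1, hik⟩) := by
            rw [tedge, hcyci]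
          have hedgem : tedge t (⟨m - 1, h1⟩ : Fin k) = (t ⟨m - 1, by omega⟩, t ⟨m, by omega⟩) := by
            rw [tedge, hcycm]
          rw [hedgei, hedgem] at hrel
          -- bridge between u, v and t
          have hut : ∀ (a : ℕ) (ha : a < m), u ⟨a, ha⟩ = t ⟨a, by omega⟩ := by
            intro a ha
            rw [← hv.2, ← hft]
            rfl
          have hvt : v (Fin.last m) = t ⟨m, by omega⟩ := by rw [← hft]; rfl
          show v (Fin.last m) ∈ D
          rw [hD, Finset.mem_filter]
          refine ⟨Finset.mem_univ _, ?_⟩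
          rw [hut i.1 hi1, hut (i.1+1) hi2, hut (m-1) hm1, hvt]
          convert hrel using 2 <;> apply Fin.ext <;> simp
      calc (T.image fun t => fun i : Fin (m+1) => t (Fin.castLE hm i)).card
          ≤ cnat m * ((T.image fun t => fun i : Fin (m+1) => t (Fin.castLE hm i)).image
              (fun v => fun i : Fin m => v i.castSucc)).card :=
            Finset.card_le_mul_card_image _ _ hfiber
        _ = cnat m * (T.image fun t => fun i : Fin m => t (Fin.castLE hm' i)).card := by
            rw [hcomp]
        _ ≤ cnat m * ∏ j ∈ Finset.range m, cnat j :=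
            Nat.mul_le_mul_left _ (ih hm')
        _ = ∏ j ∈ Finset.range (m+1), cnat j := by
            rw [Finset.prod_range_succ, mul_comm]
  have hfin := key k le_rfl
  have himg : (T.image fun t => fun i : Fin k => t (Fin.castLE le_rfl i)) = T := by
    have : (fun t : Fin k → Fin n => fun i : Fin k => t (Fin.castLE le_rfl i)) = id := by
      funext t i; rfl
    rw [this, Finset.image_id]
  rwa [himg] at hfin

open Classical in
/-- The main counting bound, with the singleton case phrased for the last index. -/
lemma TFin_main (R : (n : ℕ) → (Fin n × Fin n) → (Fin n × Fin n) → Prop)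
    (B : ℕ) (hB : 1 ≤ B) (hE2 : CondE2 R B)
    {k : ℕ} (hk : 1 ≤ k) (s : Setoid (Fin k)) (r : ℕ) (hr : r = Nat.card (Quotient s))
    (n : ℕ) (hn : B ≤ n) :
    (TFin R n k s).card ≤ n ^ (r + 1) * B ^ (k - r - 1) ∧
    (IsMinBlock s ⟨k - 1, by omega⟩ → (TFin R n k s).card ≤ n ^ r * B ^ (k - r)) := by
  classical
  have hr1 : 1 ≤ r := by
    rw [hr]
    haveI : Nonempty (Quotient s) := ⟨Quotient.mk s ⟨0, by omega⟩⟩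
    exact Nat.card_pos
  set cnat : ℕ → ℕ := fun j => (if j = 0 then n
        else if ∃ h : j - 1 < k, IsMinBlock s ⟨j - 1, h⟩ then n else B) with hcnat
  have hprod := TFin_card_le_prod R B hE2 s n
  set F := (Finset.range k).filter (fun j => j = 0 ∨ ∃ h : j - 1 < k, IsMinBlock s ⟨j - 1, h⟩)
    with hF
  have hFk : F.card ≤ k := le_trans (Finset.card_filter_le _ _) (by simp)
  have hprodeq : ∏ j ∈ Finset.range k, cnat j = n ^ F.card * B ^ (k - F.card) := by
    rw [← Finset.prod_filter_mul_prod_filter_not (Finset.range k)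
      (fun j => j = 0 ∨ ∃ h : j - 1 < k, IsMinBlock s ⟨j - 1, h⟩) cnat]
    have e1 : ∏ j ∈ F, cnat j = n ^ F.card := by
      rw [Finset.prod_congr rfl (g := fun _ => n) ?_, Finset.prod_const]
      intro j hj
      rw [hF, Finset.mem_filter] at hj
      rcases hj.2 with h0 | hmin
      · simp [hcnat, h0]
      · simp only [hcnat]
        rcases Nat.eq_zero_or_pos j with h0 | h0
        · simp [h0]
        · rw [if_neg (by omega), if_pos hmin]
    have e2 : ∏ j ∈ (Finset.range k).filter
        (fun j => ¬(j = 0 ∨ ∃ h : j - 1 < k, IsMinBlock s ⟨j - 1, h⟩)), cnat j =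
        B ^ (k - F.card) := by
      rw [Finset.prod_congr rfl (g := fun _ => B) ?_, Finset.prod_const]
      · congr 1
        have h4 := Finset.card_filter_add_card_filter_not
          (s := Finset.range k)
          (p := fun j => j = 0 ∨ ∃ h : j - 1 < k, IsMinBlock s ⟨j - 1, h⟩)
        simp only [Finset.card_range] at h4
        rw [← hF] at h4
        omega
      · intro j hj
        rw [Finset.mem_filter] at hj
        push_neg at hj
        simp only [hcnat]
        rw [if_neg hj.2.1, if_neg (by intro h; exact hj.2.2 h.1 h.2)]
    rw [e1, e2]
  -- F.card ≤ 1 + card of the shifted min set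
  set F0 := (Finset.range k).filter
    (fun j => 0 < j ∧ ∃ h : j - 1 < k, IsMinBlock s ⟨j - 1, h⟩) with hF0
  have hFF0 : F.card ≤ 1 + F0.card := by
    have hsub : F ⊆ insert 0 F0 := by
      intro j hj
      rw [hF, Finset.mem_filter] at hj
      rcases hj.2 with h0 | hmin
      · rw [h0]; exact Finset.mem_insert_self _ _
      · rcases Nat.eq_zero_or_pos j with h0 | h0
        · rw [h0]; exact Finset.mem_insert_self _ _
        · exact Finset.mem_insert_of_mem (by rw [hF0, Finset.mem_filter]; exact ⟨hj.1, h0, hmin⟩)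
    calc F.card ≤ (insert 0 F0).card := Finset.card_le_card hsub
      _ ≤ 1 + F0.card := by rw [add_comm]; exact Finset.card_insert_le _ _
  set Mins := Finset.univ.filter (fun j : Fin k => IsMinBlock s j) with hMins
  have hMinsr : Mins.card = r := by rw [hMins, card_isMinBlock, hr]
  -- the injection from F0 into Mins
  set φ : ℕ → Fin k := fun j => if h : j - 1 < k then (⟨j - 1, h⟩ : Fin k) else ⟨0, by omega⟩
    with hφ
  have hφinj : Set.InjOn φ ↑F0 := by
    intro a ha b hb hab
    rw [Finset.mem_coe, hF0, Finset.mem_filter, Finset.mem_range] at ha hb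
    simp only [hφ, dif_pos (show a - 1 < k by omega), dif_pos (show b - 1 < k by omega)] at hab
    have := congrArg Fin.val hab
    simp at this
    omega
  have hφmaps : ∀ j ∈ F0, φ j ∈ Mins := by
    intro j hj
    rw [hF0, Finset.mem_filter] at hj
    obtain ⟨hjr, hj0, hjh, hjmin⟩ := hj
    simp only [hφ, dif_pos hjh]
    rw [hMins, Finset.mem_filter]
    exact ⟨Finset.mem_univ _, hjmin⟩
  have hF0r : F0.card ≤ r := by
    rw [← hMinsr]
    exact Finset.card_le_card_of_injOn φ hφmaps hφinj
  have hbound : (TFin R n k s).card ≤ n ^ F.card * B ^ (k - F.card) := by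
    rw [← hprodeq]; exact hprod
  constructor
  · calc (TFin R n k s).card ≤ n ^ F.card * B ^ (k - F.card) := hbound
      _ ≤ n ^ (r + 1) * B ^ (k - (r + 1)) := arith_mono hB hn (by omega)
      _ = n ^ (r + 1) * B ^ (k - r - 1) := by rw [Nat.sub_sub]
  · intro hminlast
    -- in this case φ misses the last element, so F0.card ≤ r - 1
    have hlastMins : (⟨k - 1, by omega⟩ : Fin k) ∈ Mins := by
      rw [hMins, Finset.mem_filter]; exact ⟨Finset.mem_univ _, hminlast⟩
    have hφmaps' : ∀ j ∈ F0, φ j ∈ Mins.erase ⟨k - 1, by omega⟩ := by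
      intro j hj
      have h2 := hφmaps j hj
      rw [hF0, Finset.mem_filter, Finset.mem_range] at hj
      refine Finset.mem_erase.mpr ⟨?_, h2⟩
      simp only [hφ, dif_pos (show j - 1 < k by omega)]
      intro hfx
      have := congrArg Fin.val hfx
      simp at this
      omega
    have hF0r' : F0.card ≤ r - 1 := by
      have h3 : (Mins.erase (⟨k - 1, by omega⟩ : Fin k)).card = r - 1 := by
        rw [Finset.card_erase_of_mem hlastMins, hMinsr]
      rw [← h3]
      exact Finset.card_le_card_of_injOn φ hφmaps' hφinj
    calc (TFin R n k s).card ≤ n ^ F.card * B ^ (k - F.card) := hbound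
      _ ≤ n ^ r * B ^ (k - r) := by
          have : F.card ≤ r := by omega
          exact arith_mono hB hn this

end Lemma32Helpers

/-- Counting bound for `T_{n,k}(π)` (Lemma 3.2): if `π` has `r` blocks and `n ≥ B`, then
`#T_{n,k}(π) ≤ n^{r+1}·B^{k−r−1}`, and `#T_{n,k}(π) ≤ n^r·B^{k−r}` if `π` has a singleton. -/
theorem stmt10 (R : (n : ℕ) → (Fin n × Fin n) → (Fin n × Fin n) → Prop)
    (hR : EquivFamily R) (B : ℕ) (hB : 1 ≤ B) (hE2 : CondE2 R B)
    (k : ℕ) (hk : 1 ≤ k) (s : Setoid (Fin k)) (r : ℕ) (hr : r = Nat.card (Quotient s))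
    (n : ℕ) (hn : B ≤ n) :
    (TFin R n k s).card ≤ n ^ (r + 1) * B ^ (k - r - 1) ∧
    ((∃ i : Fin k, ∀ j : Fin k, s.r i j → j = i) →
      (TFin R n k s).card ≤ n ^ r * B ^ (k - r)) := by
  classical
  have hmain := TFin_main R B hB hE2 hk s r hr n hn
  refine ⟨hmain.1, ?_⟩
  rintro ⟨i₀, hsing⟩
  haveI : NeZero k := ⟨by omega⟩
  set last : Fin k := ⟨k - 1, by omega⟩ with hlast
  set d : Fin k := i₀ - last with hd
  have hld : last + d = i₀ := by rw [hd]; exact add_sub_cancel last i₀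
  set s' := rotSetoid s d with hs'
  have hr' : r = Nat.card (Quotient s') := by rw [hs', rotSetoid_card hk, hr]
  have hminlast : IsMinBlock s' last := by
    intro j hj
    have hj' : s.r (j + d) (last + d) := hj
    rw [hld] at hj'
    have : j + d = i₀ := hsing _ (s.symm hj')
    have hjlast : j = last := by
      have := this.trans hld.symm
      exact add_right_cancel this
    rw [hjlast]
  have hcard : (TFin R n k s).card = (TFin R n k s').card := TFin_rot_card R n hk s d
  rw [hcard]
  exact (TFin_main R B hB hE2 hk s' r hr' n hn).2 hminlast
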